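/- Fix d ≥ 2 and an integer k ≥ 1, and let r be an arc-length parameterization of a closed curve of length 1 in ℝ^d. Then there exists s ∈ [0,1] such that ∑_{i=0}^{k−1} ‖r(s + (i+1)/k) − r(s + i/k)‖ ≤ (k/π)·sin(π/k). -/

import Mathlib

open MeasureTheory Set Real Function

noncomputable section

/-- `r` is an arc-length parameterization of a closed curve of length 1 in `ℝ^d`. -/
def IsUnitClosedCurve (d : ℕ) (r : ℝ → EuclideanSpace ℝ (Fin d)) : Prop :=
  Continuous r ∧ Periodic r 1 ∧ LipschitzWith 1 r ∧
    eVariationOn r (Icc (0:ℝ) 1) = 1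

/-- The length of a shortest closed curve covering `S`. -/
def w {d : ℕ} (S : Set (EuclideanSpace ℝ (Fin d))) : ENNReal :=
  ⨅ (γ : {γ : ℝ → EuclideanSpace ℝ (Fin d) //
      Continuous γ ∧ Periodic γ 1 ∧ S ⊆ γ '' Icc (0:ℝ) 1}),
    eVariationOn γ.1 (Icc (0:ℝ) 1)

/-- A partition of `[0,1)` into `k` measurable sets of measure `1/k` each. -/
def IsEqualPartition (k : ℕ) (A : Fin k → Set ℝ) : Prop :=
  (∀ i, MeasurableSet (A i)) ∧ Pairwise (onFun Disjoint A) ∧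
    (⋃ i, A i) = Ico (0:ℝ) 1 ∧ ∀ i, volume (A i) = ENNReal.ofReal (1 / k)

def betaCurve (d k : ℕ) (r : ℝ → EuclideanSpace ℝ (Fin d)) : ENNReal :=
  ⨅ (A : {A : Fin k → Set ℝ // IsEqualPartition k A}),
    (k : ENNReal)⁻¹ * ∑ i, w (r '' A.1 i)

def betaSup (d k : ℕ) : ENNReal :=
  ⨆ (r : {r : ℝ → EuclideanSpace ℝ (Fin d) // IsUnitClosedCurve d r}),
    betaCurve d k r.1

/-- A partition of `C` into `k` nonempty sets. -/
def IsPartitionInto {α : Type*} (k : ℕ) (S : Fin k → Set α) (C : Set α) : Prop :=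
  (∀ i, (S i).Nonempty) ∧ Pairwise (onFun Disjoint S) ∧ (⋃ i, S i) = C

def gammaCurve {d : ℕ} (k : ℕ) (C : Set (EuclideanSpace ℝ (Fin d))) : ENNReal :=
  ⨅ (S : {S : Fin k → Set (EuclideanSpace ℝ (Fin d)) // IsPartitionInto k S C}),
    ⨆ i, w (S.1 i)

def gammaSup (d k : ℕ) : ENNReal :=
  ⨆ (r : {r : ℝ → EuclideanSpace ℝ (Fin d) // IsUnitClosedCurve d r}),
    gammaCurve k (r.1 '' Icc (0:ℝ) 1)

def circlePt (t : ℝ) : EuclideanSpace ℝ (Fin 2) :=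
  (EuclideanSpace.equiv (Fin 2) ℝ).symm ![Real.cos t, Real.sin t]

open AddCircle in
section
end

open AddCircle
open Complex (I)
open scoped ENNReal

namespace ChordAux

local instance fact_zero_lt_one_real : Fact ((0:ℝ) < 1) := ⟨zero_lt_one⟩

local notation "T1" => AddCircle (1:ℝ)
local notation "μ₁" => (haarAddCircle : Measure T1)

lemma abs_sin_nat (n : ℕ) (x : ℝ) : |Real.sin ((n:ℝ) * x)| ≤ (n:ℝ) * |Real.sin x| := by
  induction n with
  | zero => simp
  | succ m ih =>
    have h1 : ((m+1 : ℕ):ℝ) * x = (m:ℝ)*x + x := by push_cast; ring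
    rw [h1, Real.sin_add]
    refine (abs_add_le _ _).trans ?_
    rw [abs_mul, abs_mul]
    have h2 : |Real.sin ((m:ℝ)*x)| * |Real.cos x| ≤ (m:ℝ) * |Real.sin x| :=
      (mul_le_of_le_one_right (abs_nonneg _) (Real.abs_cos_le_one x)).trans ih
    have h3 : |Real.cos ((m:ℝ)*x)| * |Real.sin x| ≤ |Real.sin x| :=
      mul_le_of_le_one_left (abs_nonneg _) (Real.abs_cos_le_one _)
    push_cast
    linarith

lemma sin_int_sq (n : ℤ) (x : ℝ) : Real.sin ((n:ℝ) * x)^2 ≤ (n:ℝ)^2 * Real.sin x ^2 := by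
  have key : ∀ m : ℕ, Real.sin ((m:ℝ) * x)^2 ≤ (m:ℝ)^2 * Real.sin x^2 := by
    intro m
    calc Real.sin ((m:ℝ)*x)^2 = |Real.sin ((m:ℝ)*x)|^2 := (sq_abs _).symm
      _ ≤ ((m:ℝ) * |Real.sin x|)^2 :=
          pow_le_pow_left₀ (abs_nonneg _) (abs_sin_nat m x) 2
      _ = (m:ℝ)^2 * Real.sin x^2 := by rw [mul_pow, sq_abs]
  rcases le_or_gt 0 n with hn | hn
  · lift n to ℕ using hn
    exact_mod_cast key n
  · have h2 := key (-n).toNat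
    have hcast : (((-n).toNat : ℕ) : ℝ) = -(n:ℝ) := by
      have : ((-n).toNat : ℤ) = -n := Int.toNat_of_nonneg (by omega)
      exact_mod_cast this
    rw [hcast] at h2
    rw [neg_mul, Real.sin_neg] at h2
    nlinarith [h2]

lemma norm_exp_sub_one_sq (θ : ℝ) : ‖Complex.exp ((θ:ℂ) * I) - 1‖^2 = 4 * Real.sin (θ/2)^2 := by
  rw [Complex.exp_mul_I]
  have h1 : Complex.cos (θ:ℂ) + Complex.sin (θ:ℂ) * I - 1
      = ((Real.cos θ - 1 : ℝ) : ℂ) + ((Real.sin θ : ℝ) : ℂ) * I := by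
    rw [← Complex.ofReal_cos, ← Complex.ofReal_sin]; push_cast; ring
  rw [h1, Complex.sq_norm, Complex.normSq_add_mul_I]
  have hcos : Real.cos θ = 2 * Real.cos (θ/2)^2 - 1 := by
    rw [← Real.cos_two_mul]; congr 1; ring
  nlinarith [Real.sin_sq_add_cos_sq θ, Real.sin_sq_add_cos_sq (θ/2), hcos]

lemma fourier_addx (n : ℤ) (x y : T1) : fourier n (x + y) = fourier n x * fourier n y := by
  simp_rw [fourier_apply, smul_add, AddCircle.toCircle_add, Circle.coe_mul]

lemma contInt {E : Type*} [NormedAddCommGroup E] {f : T1 → E} (hf : Continuous f) :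
    Integrable f μ₁ :=
  hf.integrable_of_hasCompactSupport (HasCompactSupport.of_compactSpace f)

lemma parseval (f : C(T1, ℂ)) :
    Summable (fun n : ℤ => ‖fourierCoeff (⇑f) n‖^2) ∧
      ∑' n : ℤ, ‖fourierCoeff (⇑f) n‖^2 = ∫ x : T1, ‖f x‖^2 ∂μ₁ := by
  constructor
  · have hm := lp.memℓp (fourierBasis.repr (ContinuousMap.toLp (E := ℂ) 2 μ₁ ℂ f))
    rw [memℓp_gen_iff (by norm_num : (0:ℝ) < (2:ℝ≥0∞).toReal)] at hm
    have heq : (fun n : ℤ => ‖fourierCoeff (⇑f) n‖^2)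
        = fun i : ℤ => ‖(fourierBasis.repr (ContinuousMap.toLp (E := ℂ) 2 μ₁ ℂ f)) i‖
            ^ (2:ℝ≥0∞).toReal := by
      funext n
      rw [fourierBasis_repr, fourierCoeff_toLp]
      norm_num
    rw [heq]
    exact hm
  · have hps := tsum_sq_fourierCoeff (ContinuousMap.toLp (E := ℂ) 2 μ₁ ℂ f)
    simp_rw [fourierCoeff_toLp] at hps
    rw [hps]
    apply integral_congr_ae
    filter_upwards [ContinuousMap.coeFn_toLp (p := 2) (𝕜 := ℂ) μ₁ f] with x hx
    rw [hx]


lemma fourierCoeff_shift (g : C(T1, ℂ)) (b : ℝ) (n : ℤ) :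
    fourierCoeff (fun x : T1 => g (x + (b:T1))) n
      = fourier n ((b:T1)) * fourierCoeff (⇑g) n := by
  have key := MeasureTheory.integral_add_right_eq_self (μ := μ₁)
    (fun y : T1 => fourier (-n) (y - (b:T1)) • g y) ((b:T1))
  simp only [add_sub_cancel_right] at key
  have h2 : ∀ y : T1, fourier (-n) (y - (b:T1)) • g y
      = (fourier n ((b:T1))) • (fourier (-n) y • g y) := by
    intro y
    rw [sub_eq_add_neg, add_comm, fourier_addx, smul_smul]
    have hb : fourier (-n) (-(b:T1)) = fourier n ((b:T1)) := by
      rw [← AddCircle.coe_neg, fourier_coe_apply, fourier_coe_apply]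
      push_cast
      ring_nf
    rw [hb]
  unfold fourierCoeff
  rw [key]
  simp_rw [h2]
  rw [integral_smul, smul_eq_mul]

lemma fourierCoeff_diff (g : C(T1, ℂ)) (b : ℝ) (n : ℤ) :
    fourierCoeff (fun x : T1 => g (x + (b:T1)) - g x) n
      = (fourier n ((b:T1)) - 1) * fourierCoeff (⇑g) n := by
  have hgc : Continuous fun x : T1 => g (x + (b:T1)) :=
    g.continuous.comp (continuous_id.add continuous_const)
  have h1 : Integrable (fun x : T1 => fourier (-n) x • g (x + (b:T1))) μ₁ :=
    contInt (((fourier (-n)).continuous.smul hgc))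
  have h2 : Integrable (fun x : T1 => fourier (-n) x • g x) μ₁ :=
    contInt (((fourier (-n)).continuous.smul g.continuous))
  unfold fourierCoeff
  simp_rw [smul_sub]
  rw [integral_sub h1 h2]
  have := fourierCoeff_shift g b n
  unfold fourierCoeff at this
  rw [this]
  ring

lemma norm_fourierCoeff_diff_sq (g : C(T1, ℂ)) (b : ℝ) (n : ℤ) :
    ‖fourierCoeff (fun x : T1 => g (x + (b:T1)) - g x) n‖^2
      = 4 * Real.sin (π * n * b)^2 * ‖fourierCoeff (⇑g) n‖^2 := by
  rw [fourierCoeff_diff, norm_mul, mul_pow]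
  congr 1
  have h1 : fourier n ((b:T1)) = Complex.exp (((2*π*n*b : ℝ):ℂ) * I) := by
    rw [fourier_coe_apply]
    push_cast
    ring_nf
  rw [h1, norm_exp_sub_one_sq]
  congr 1
  congr 1
  ring


lemma core (d : ℕ) (g : Fin d → C(T1, ℂ))
    (hlip : ∀ (b : ℝ) (x : T1), ∑ j, ‖g j (x + (b:T1)) - g j x‖^2 ≤ b^2) (a : ℝ) :
    ∑ j, ∫ x : T1, ‖g j (x + (a:T1)) - g j x‖^2 ∂μ₁ ≤ (Real.sin (π * a)/π)^2 := by
  classical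
  -- the difference functions, as continuous maps
  set D : ℝ → Fin d → C(T1, ℂ) := fun b j =>
    ⟨fun x => g j (x + (b:T1)) - g j x,
      ((g j).continuous.comp (continuous_id.add continuous_const)).sub (g j).continuous⟩
    with hD
  set m : Fin d → ℤ → ℝ := fun j n => ‖fourierCoeff (⇑(g j)) n‖^2 with hm
  have hm0 : ∀ j n, 0 ≤ m j n := fun j n => sq_nonneg _
  -- Parseval for each difference function
  have hP : ∀ (b : ℝ) (j : Fin d),
      Summable (fun n : ℤ => 4 * Real.sin (π * n * b)^2 * m j n) ∧
        ∑' n : ℤ, 4 * Real.sin (π * n * b)^2 * m j n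
          = ∫ x : T1, ‖g j (x + (b:T1)) - g j x‖^2 ∂μ₁ := by
    intro b j
    have hpar := parseval (D b j)
    have hcoe : (fun n : ℤ => ‖fourierCoeff (⇑(D b j)) n‖^2)
        = fun n : ℤ => 4 * Real.sin (π * n * b)^2 * m j n := by
      funext n
      exact norm_fourierCoeff_diff_sq (g j) b n
    rw [hcoe] at hpar
    exact hpar
  -- L² bound from the Lipschitz hypothesis
  have hSB : ∀ b : ℝ, ∑ j, ∫ x : T1, ‖g j (x + (b:T1)) - g j x‖^2 ∂μ₁ ≤ b^2 := by
    intro b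
    have hInt : ∀ j : Fin d, Integrable (fun x : T1 => ‖g j (x + (b:T1)) - g j x‖^2) μ₁ :=
      fun j => contInt (((D b j).continuous.norm).pow 2)
    rw [← integral_finset_sum _ (fun j _ => hInt j)]
    calc ∫ x : T1, ∑ j, ‖g j (x + (b:T1)) - g j x‖^2 ∂μ₁
        ≤ ∫ _ : T1, b^2 ∂μ₁ := by
          apply integral_mono (integrable_finset_sum _ (fun j _ => hInt j))
            (integrable_const _) (fun x => hlip b x)
      _ = b^2 := by simp
  -- truncated bound
  have htrunc : ∀ (s : Finset ℤ) (b : ℝ),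
      ∑ j, ∑ n ∈ s, 4 * Real.sin (π * n * b)^2 * m j n ≤ b^2 := by
    intro s b
    refine le_trans ?_ (hSB b)
    apply Finset.sum_le_sum
    intro j _
    rw [← (hP b j).2]
    exact Summable.sum_le_tsum s (fun n _ => by positivity) (hP b j).1
  -- derivative (h → 0) bound
  have hderiv : ∀ s : Finset ℤ, ∑ j, ∑ n ∈ s, 4 * (π * n)^2 * m j n ≤ 1 := by
    intro s
    set bl : ℕ → ℝ := fun l => 1 / (l + 1) with hbl
    have hbl0 : ∀ l, 0 < bl l := fun l => by positivity
    have hblt : Filter.Tendsto bl Filter.atTop (nhds 0) :=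
      tendsto_one_div_add_atTop_nhds_zero_nat
    have hblt' : Filter.Tendsto bl Filter.atTop (nhdsWithin 0 {(0:ℝ)}ᶜ) :=
      tendsto_nhdsWithin_of_tendsto_nhds_of_eventually_within _ hblt
        (Filter.Eventually.of_forall fun l => (hbl0 l).ne')
    -- pointwise limit of each term
    have hterm : ∀ (j : Fin d) (n : ℤ), Filter.Tendsto
        (fun l => 4 * (Real.sin (π * n * (bl l)) / (bl l))^2 * m j n)
        Filter.atTop (nhds (4 * (π * n)^2 * m j n)) := by
      intro j n
      set c : ℝ := π * n with hc
      have hd1 : HasDerivAt (fun t : ℝ => c * t) c 0 := by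
        simpa using (hasDerivAt_id (0:ℝ)).const_mul c
      have hd2 : HasDerivAt (fun t : ℝ => Real.sin (c * t)) c 0 := by
        have := (Real.hasDerivAt_sin (c * 0)).comp 0 hd1
        simpa [Function.comp_def] using this
      have hsl := hasDerivAt_iff_tendsto_slope.mp hd2
      have hslope : Filter.Tendsto (fun l => Real.sin (c * (bl l)) / (bl l))
          Filter.atTop (nhds c) := by
        have := hsl.comp hblt'
        refine this.congr fun l => ?_
        simp [slope_def_field, Function.comp]
      have : Filter.Tendsto (fun l => 4 * (Real.sin (c * (bl l)) / (bl l))^2 * m j n)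
          Filter.atTop (nhds (4 * c^2 * m j n)) :=
        (((hslope.pow 2).const_mul 4).mul_const (m j n))
      refine this.congr fun l => ?_
      ring_nf
    have htends : Filter.Tendsto
        (fun l => ∑ j, ∑ n ∈ s, 4 * (Real.sin (π * n * (bl l)) / (bl l))^2 * m j n)
        Filter.atTop (nhds (∑ j, ∑ n ∈ s, 4 * (π * n)^2 * m j n)) := by
      apply tendsto_finset_sum
      intro j _
      apply tendsto_finset_sum
      intro n _
      exact hterm j n
    refine le_of_tendsto htends (Filter.Eventually.of_forall fun l => ?_)
    have h1 := htrunc s (bl l)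
    have hb2 : 0 < (bl l)^2 := by positivity
    have heq : ∑ j, ∑ n ∈ s, 4 * (Real.sin (π * n * (bl l)) / (bl l))^2 * m j n
        = (∑ j, ∑ n ∈ s, 4 * Real.sin (π * n * (bl l))^2 * m j n) / (bl l)^2 := by
      rw [Finset.sum_div]
      apply Finset.sum_congr rfl
      intro j _
      rw [Finset.sum_div]
      apply Finset.sum_congr rfl
      intro n _
      field_simp
    rw [heq, div_le_one hb2]
    exact h1
  -- frequency comparison
  have hfreq : ∀ (j : Fin d) (n : ℤ),
      4 * Real.sin (π * n * a)^2 * m j n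
        ≤ (Real.sin (π * a)/π)^2 * (4 * (π * n)^2 * m j n) := by
    intro j n
    have hs := sin_int_sq n (π * a)
    have hπ : (0:ℝ) < π := Real.pi_pos
    have harg : π * (n:ℝ) * a = (n:ℝ) * (π * a) := by ring
    rw [harg]
    have hrhs : (Real.sin (π * a)/π)^2 * (4 * (π * n)^2 * m j n)
        = 4 * ((n:ℝ)^2 * Real.sin (π * a)^2) * m j n := by
      field_simp
    rw [hrhs]
    have := hm0 j n
    nlinarith [hs, hm0 j n]
  -- assembling via tsum
  have hsum_a : ∀ j : Fin d, Summable (fun n : ℤ => 4 * Real.sin (π * n * a)^2 * m j n) :=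
    fun j => (hP a j).1
  have hfin : ∀ s : Finset ℤ,
      ∑ n ∈ s, (∑ j, 4 * Real.sin (π * n * a)^2 * m j n) ≤ (Real.sin (π * a)/π)^2 := by
    intro s
    rw [Finset.sum_comm]
    calc ∑ j, ∑ n ∈ s, 4 * Real.sin (π * n * a)^2 * m j n
        ≤ ∑ j, ∑ n ∈ s, (Real.sin (π * a)/π)^2 * (4 * (π * n)^2 * m j n) :=
          Finset.sum_le_sum fun j _ => Finset.sum_le_sum fun n _ => hfreq j n
      _ = (Real.sin (π * a)/π)^2 * ∑ j, ∑ n ∈ s, 4 * (π * n)^2 * m j n := by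
          rw [Finset.mul_sum]
          exact Finset.sum_congr rfl fun j _ => (Finset.mul_sum _ _ _).symm
      _ ≤ (Real.sin (π * a)/π)^2 * 1 :=
          mul_le_mul_of_nonneg_left (hderiv s) (sq_nonneg _)
      _ = (Real.sin (π * a)/π)^2 := mul_one _
  have hsummable : Summable (fun n : ℤ => ∑ j, 4 * Real.sin (π * n * a)^2 * m j n) :=
    summable_sum fun j _ => hsum_a j
  have htsum := Summable.tsum_le_of_sum_le hsummable hfin
  calc ∑ j, ∫ x : T1, ‖g j (x + (a:T1)) - g j x‖^2 ∂μ₁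
      = ∑ j, ∑' n : ℤ, 4 * Real.sin (π * n * a)^2 * m j n :=
        (Finset.sum_congr rfl fun j _ => ((hP a j).2).symm)
    _ = ∑' n : ℤ, ∑ j, 4 * Real.sin (π * n * a)^2 * m j n :=
        (Summable.tsum_finsetSum fun j _ => hsum_a j).symm
    _ ≤ (Real.sin (π * a)/π)^2 := htsum


variable {d : ℕ}

lemma lift_continuous {α : Type*} [TopologicalSpace α] {f : ℝ → α} (hf : Continuous f)
    (hp : Periodic f 1) : Continuous hp.lift := by
  exact hf.quotient_liftOn' _

lemma coe_add_coe (t b : ℝ) : ((t:T1) + (b:T1)) = ((t + b : ℝ) : T1) := rfl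

lemma l2_chord (r : ℝ → EuclideanSpace ℝ (Fin d)) (hc : Continuous r)
    (hp : Periodic r 1) (hl : LipschitzWith 1 r) (a : ℝ) :
    ∫ x : T1, ‖hp.lift (x + (a:T1)) - hp.lift x‖^2 ∂μ₁ ≤ (Real.sin (π * a)/π)^2 := by
  classical
  have hcoordc : ∀ j : Fin d, Continuous fun t : ℝ => ((r t j : ℝ) : ℂ) := by
    intro j
    exact Complex.continuous_ofReal.comp ((PiLp.continuous_apply _ _ j).comp hc)
  have hcoordp : ∀ j : Fin d, Periodic (fun t : ℝ => ((r t j : ℝ) : ℂ)) 1 := by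
    intro j t
    simp [hp t]
  set g : Fin d → C(T1, ℂ) := fun j => ⟨(hcoordp j).lift, lift_continuous (hcoordc j) _⟩
    with hg
  -- pointwise identity
  have hpt : ∀ (b : ℝ) (x : T1),
      ∑ j, ‖g j (x + (b:T1)) - g j x‖^2 = ‖hp.lift (x + (b:T1)) - hp.lift x‖^2 := by
    intro b x
    induction x using QuotientAddGroup.induction_on with
    | H t =>
      have h1 : ∀ j : Fin d, g j ((t:T1) + (b:T1)) = ((r (t+b) j : ℝ) : ℂ) := by
        intro j
        rw [coe_add_coe]
        exact (hcoordp j).lift_coe (t+b)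
      have h2 : ∀ j : Fin d, g j (t:T1) = ((r t j : ℝ) : ℂ) := fun j => (hcoordp j).lift_coe t
      have h3 : hp.lift ((t:T1) + (b:T1)) = r (t+b) := by
        rw [coe_add_coe]; exact Periodic.lift_coe _ _
      have h4 : hp.lift (t:T1) = r t := Periodic.lift_coe _ _
      rw [h3, h4]
      have h5 : ∀ j : Fin d, ‖g j ((t:T1) + (b:T1)) - g j (t:T1)‖^2
          = ‖r (t+b) j - r t j‖^2 := by
        intro j
        rw [h1 j, h2 j, ← Complex.ofReal_sub]
        rw [Complex.norm_real]
      simp_rw [h5]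
      have h6 : ‖r (t+b) - r t‖^2 = ∑ j, ‖(r (t+b) - r t) j‖^2 := by
        rw [EuclideanSpace.norm_eq]
        rw [Real.sq_sqrt]
        positivity
      rw [h6]
      apply Finset.sum_congr rfl
      intro j _
      congr 1
  have hlip : ∀ (b : ℝ) (x : T1), ∑ j, ‖g j (x + (b:T1)) - g j x‖^2 ≤ b^2 := by
    intro b x
    rw [hpt b x]
    induction x using QuotientAddGroup.induction_on with
    | H t =>
      have h3 : hp.lift ((t:T1) + (b:T1)) = r (t+b) := by
        rw [coe_add_coe]; exact Periodic.lift_coe _ _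
      have h4 : hp.lift (t:T1) = r t := Periodic.lift_coe _ _
      rw [h3, h4]
      have := hl.dist_le_mul (t+b) t
      rw [dist_eq_norm, dist_eq_norm] at this
      simp only [NNReal.coe_one, one_mul, add_sub_cancel_left] at this
      calc ‖r (t+b) - r t‖^2 ≤ ‖(b : ℝ)‖^2 :=
            pow_le_pow_left₀ (norm_nonneg _) this 2
        _ = b^2 := by rw [Real.norm_eq_abs, sq_abs]
  have hcore := core d g hlip a
  calc ∫ x : T1, ‖hp.lift (x + (a:T1)) - hp.lift x‖^2 ∂μ₁
      = ∫ x : T1, ∑ j, ‖g j (x + (a:T1)) - g j x‖^2 ∂μ₁ := by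
        apply integral_congr_ae
        exact Filter.Eventually.of_forall fun x => (hpt a x).symm
    _ = ∑ j, ∫ x : T1, ‖g j (x + (a:T1)) - g j x‖^2 ∂μ₁ := by
        apply integral_finset_sum
        intro j _
        apply contInt
        apply Continuous.pow
        apply Continuous.norm
        exact ((g j).continuous.comp (continuous_id.add continuous_const)).sub (g j).continuous
    _ ≤ (Real.sin (π * a)/π)^2 := hcore


lemma l1_chord (r : ℝ → EuclideanSpace ℝ (Fin d)) (hc : Continuous r)
    (hp : Periodic r 1) (hl : LipschitzWith 1 r) (a : ℝ) (ha : 0 < Real.sin (π * a)) :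
    ∫ x : T1, ‖hp.lift (x + (a:T1)) - hp.lift x‖ ∂μ₁ ≤ Real.sin (π * a) / π := by
  have hπ : (0:ℝ) < π := Real.pi_pos
  set B : ℝ := Real.sin (π * a) / π with hB
  have hB0 : 0 < B := by positivity
  set F : T1 → ℝ := fun x => ‖hp.lift (x + (a:T1)) - hp.lift x‖ with hF
  have hliftc : Continuous hp.lift := lift_continuous hc hp
  have hFc : Continuous F :=
    ((hliftc.comp (continuous_id.add continuous_const)).sub hliftc).norm
  have hFint : Integrable F μ₁ := contInt hFc
  have hF2int : Integrable (fun x => (F x)^2) μ₁ := contInt (hFc.pow 2)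
  have hpt : ∀ x : T1, F x ≤ ((F x)^2 + B^2) / (2*B) := by
    intro x
    rw [le_div_iff₀ (by positivity)]
    nlinarith [sq_nonneg (F x - B)]
  have hl2 := l2_chord r hc hp hl a
  calc ∫ x : T1, F x ∂μ₁
      ≤ ∫ x : T1, ((F x)^2 + B^2) / (2*B) ∂μ₁ := by
        apply integral_mono hFint _ hpt
        exact (hF2int.add (integrable_const _)).div_const _
    _ = ((∫ x : T1, (F x)^2 ∂μ₁) + B^2) / (2*B) := by
        rw [integral_div, integral_add hF2int (integrable_const _)]
        simp
    _ ≤ (B^2 + B^2) / (2*B) := by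
        apply div_le_div_of_nonneg_right ?_ (by positivity)
        have : ∫ x : T1, (F x)^2 ∂μ₁ ≤ B^2 := hl2
        linarith
    _ = B := by field_simp; ring
  
lemma interval_chord (r : ℝ → EuclideanSpace ℝ (Fin d)) (hc : Continuous r)
    (hp : Periodic r 1) (hl : LipschitzWith 1 r) (a : ℝ) (ha : 0 < Real.sin (π * a)) :
    ∫ t in (0:ℝ)..1, ‖r (t + a) - r t‖ ≤ Real.sin (π * a) / π := by
  have h := AddCircle.intervalIntegral_preimage 1 0
    (fun x : T1 => ‖hp.lift (x + (a:T1)) - hp.lift x‖)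
  have hpt : ∀ t : ℝ, ‖hp.lift ((t:T1) + (a:T1)) - hp.lift (t:T1)‖ = ‖r (t + a) - r t‖ := by
    intro t
    rw [coe_add_coe]
    rw [show hp.lift ((t + a : ℝ) : T1) = r (t+a) from hp.lift_coe (t+a),
      show hp.lift ((t : ℝ) : T1) = r t from hp.lift_coe t]
  rw [zero_add] at h
  have hvol : (volume : Measure T1) = ENNReal.ofReal 1 • (μ₁) :=
    AddCircle.volume_eq_smul_haarAddCircle
  have hvol' : ∫ x : T1, ‖hp.lift (x + (a:T1)) - hp.lift x‖
      = ∫ x : T1, ‖hp.lift (x + (a:T1)) - hp.lift x‖ ∂μ₁ := by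
    rw [hvol, integral_smul_measure]
    simp
  have heq : ∫ t in (0:ℝ)..1, ‖r (t + a) - r t‖
      = ∫ x : T1, ‖hp.lift (x + (a:T1)) - hp.lift x‖ ∂μ₁ := by
    rw [← hvol', ← h]
    apply intervalIntegral.integral_congr
    intro t _
    exact (hpt t).symm
  rw [heq]
  exact l1_chord r hc hp hl a ha

end ChordAux

theorem exists_good_chord_sum (d k : ℕ) (hd : 2 ≤ d) (hk : 1 ≤ k)
    (r : ℝ → EuclideanSpace ℝ (Fin d)) (hr : IsUnitClosedCurve d r) :
    ∃ s ∈ Icc (0:ℝ) 1,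
      ∑ i ∈ Finset.range k, ‖r (s + ((i : ℝ) + 1) / k) - r (s + (i : ℝ) / k)‖ ≤
        (k / π) * Real.sin (π / k) := by
  obtain ⟨hc, hp, hl, -⟩ := hr
  rcases eq_or_lt_of_le hk with hk1 | hk2
  · -- k = 1
    obtain rfl : k = 1 := hk1.symm
    refine ⟨0, by norm_num, ?_⟩
    simp only [Finset.sum_range_one]
    have h01 : (0:ℝ) + (((0:ℕ):ℝ) + 1)/((1:ℕ):ℝ) = 1 := by norm_num
    have h02 : (0:ℝ) + ((0:ℕ):ℝ)/((1:ℕ):ℝ) = 0 := by norm_num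
    rw [h01, h02]
    have hr1 : r 1 = r 0 := by simpa using hp 0
    rw [hr1, sub_self, norm_zero]
    rw [show (((1:ℕ):ℝ))/π * Real.sin (π/((1:ℕ):ℝ)) = Real.sin π / π by norm_num]
    simp [Real.sin_pi]
  · -- 2 ≤ k
    have hk2' : (1:ℝ) < (k:ℝ) := by exact_mod_cast hk2
    have hk0 : (0:ℝ) < k := by linarith
    have hπ : (0:ℝ) < π := Real.pi_pos
    set a : ℝ := 1 / k with ha
    have ha0 : 0 < a := by positivity
    have hsin : 0 < Real.sin (π * a) := by
      apply Real.sin_pos_of_pos_of_lt_pi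
      · positivity
      · rw [ha]
        calc π * (1/(k:ℝ)) < π * 1 := by
              apply mul_lt_mul_of_pos_left _ hπ
              rw [div_lt_one hk0]
              exact hk2'
          _ = π := mul_one π
    have hsummandc : ∀ (c₁ c₂ : ℝ), Continuous fun s : ℝ => ‖r (s + c₁) - r (s + c₂)‖ :=
      fun c₁ c₂ => ((hc.comp (continuous_id.add continuous_const)).sub
        (hc.comp (continuous_id.add continuous_const))).norm
    set f : ℝ → ℝ := fun s =>
      ∑ i ∈ Finset.range k, ‖r (s + ((i : ℝ) + 1) / k) - r (s + (i : ℝ) / k)‖ with hf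
    have hfc : Continuous f :=
      continuous_finset_sum _ fun i _ => hsummandc _ _
    obtain ⟨s₀, hs₀, hmin⟩ := isCompact_Icc.exists_isMinOn
      (nonempty_Icc.mpr zero_le_one) hfc.continuousOn
    refine ⟨s₀, hs₀, ?_⟩
    set gch : ℝ → ℝ := fun t => ‖r (t + a) - r t‖ with hgch
    have hgp : Periodic gch 1 := by
      intro t
      simp only [hgch]
      rw [show t + 1 + a = (t + a) + 1 by ring, hp (t+a), hp t]
    have hgc : Continuous gch := ((hc.comp (continuous_id.add continuous_const)).sub hc).norm
    have hstep : ∀ i : ℕ,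
        (∫ s in (0:ℝ)..1, ‖r (s + ((i : ℝ) + 1) / k) - r (s + (i : ℝ) / k)‖)
          = ∫ t in (0:ℝ)..1, gch t := by
      intro i
      have hk0' : (k:ℝ) ≠ 0 := ne_of_gt hk0
      have harg : ∀ s : ℝ, s + ((i : ℝ) + 1) / k = (s + (i:ℝ)/k) + a := by
        intro s
        rw [ha]
        field_simp
        ring
      have h1 : (fun s : ℝ => ‖r (s + ((i : ℝ) + 1) / k) - r (s + (i : ℝ) / k)‖)
          = fun s : ℝ => gch (s + (i:ℝ)/k) := by
        funext s
        simp only [hgch]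
        rw [harg s]
      rw [h1, intervalIntegral.integral_comp_add_right gch ((i:ℝ)/k)]
      have h2 := hgp.intervalIntegral_add_eq ((i:ℝ)/k) 0
      rw [show (0:ℝ) + (i:ℝ)/k = (i:ℝ)/k by ring, show (1:ℝ) + (i:ℝ)/k = (i:ℝ)/k + 1 by ring]
      rw [h2, zero_add]
    have hint : ∫ s in (0:ℝ)..1, f s ≤ (k:ℝ) * (Real.sin (π * a)/π) := by
      calc ∫ s in (0:ℝ)..1, f s
          = ∑ i ∈ Finset.range k,
              ∫ s in (0:ℝ)..1, ‖r (s + ((i:ℝ)+1)/k) - r (s + (i:ℝ)/k)‖ := by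
            apply intervalIntegral.integral_finset_sum
            intro i _
            exact (hsummandc _ _).intervalIntegrable 0 1
        _ = ∑ _i ∈ Finset.range k, ∫ t in (0:ℝ)..1, gch t :=
            Finset.sum_congr rfl fun i _ => hstep i
        _ = (k:ℝ) * ∫ t in (0:ℝ)..1, gch t := by
            rw [Finset.sum_const, Finset.card_range, nsmul_eq_mul]
        _ ≤ (k:ℝ) * (Real.sin (π*a)/π) := by
            apply mul_le_mul_of_nonneg_left
              (ChordAux.interval_chord r hc hp hl a hsin) (le_of_lt hk0)
    have hmin' : f s₀ ≤ ∫ s in (0:ℝ)..1, f s := by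
      have h1 : f s₀ = ∫ _s in (0:ℝ)..1, f s₀ := by simp
      rw [h1]
      apply intervalIntegral.integral_mono_on zero_le_one intervalIntegrable_const
        (hfc.intervalIntegrable 0 1)
      intro x hx
      exact isMinOn_iff.mp hmin x hx
    calc f s₀ ≤ (k:ℝ) * (Real.sin (π * a)/π) := le_trans hmin' hint
      _ = ((k:ℝ)/π) * Real.sin (π/(k:ℝ)) := by
          rw [ha, mul_one_div]
          ring


end
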